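/- Let f : Q → ℝ, μ, m, δ, δ̃ ≥ 0, L > 0, y ∈ Q, c ∈ ℝ, and let ψ : E → ℝ be convex with ψ(y) = 0 and m-strongly convex relative to d on Q. Suppose: (a) μ·V[y](x) ≤ f(x) − c − ψ(x) for all x ∈ Q; (b) x⁺ ∈ Q is a δ̃-approximate minimizer of x ↦ ψ(x) + L·V[y](x) on Q; and (c) there is a value c⁺ ∈ ℝ with f(x⁺) ≤ c⁺ + δ and c⁺ ≤ c + ψ(x⁺) + L·V[y](x⁺) + δ. Then for all x ∈ Q: f(x⁺) ≤ f(x) + (L − μ)·V[y](x) − (L + m)·V[x⁺](x) + δ̃ + 2δ. -/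

import Mathlib

open RealInnerProductSpace Finset
open scoped Topology

/-- The Bregman divergence `V[y](x) = d(x) - d(y) - ⟪∇d(y), x - y⟫` generated by `d`
with gradient map `Dd`. -/
noncomputable def breg {E : Type*} [NormedAddCommGroup E] [InnerProductSpace ℝ E]
    (d : E → ℝ) (Dd : E → E) (y x : E) : ℝ :=
  d x - d y - ⟪Dd y, x - y⟫

/-- `g` is a subgradient of `ψ` at `z` (relative to the set `Q`). -/
def IsSubgradOn {E : Type*} [NormedAddCommGroup E] [InnerProductSpace ℝ E]
    (Q : Set E) (ψ : E → ℝ) (z g : E) : Prop :=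
  ∀ x ∈ Q, ψ z + ⟪g, x - z⟫ ≤ ψ x

/-- `ψ` is `m`-strongly convex relative to `d` on `Q`, where `V` is the Bregman
divergence generated by `d`. -/
def StrongRelConvexOn {E : Type*} [NormedAddCommGroup E] [InnerProductSpace ℝ E]
    (Q : Set E) (V : E → E → ℝ) (m : ℝ) (ψ : E → ℝ) : Prop :=
  ∀ z ∈ Q, ∀ g : E, IsSubgradOn Q ψ z g → ∀ x ∈ Q, ψ z + ⟪g, x - z⟫ + m * V z x ≤ ψ x

/-- `y` is a `δ`-approximate minimizer of `Ψ` on `Q`: there exists a subgradient `h`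
of `Ψ` at `y` such that `⟪h, x - y⟫ ≥ -δ` for all `x ∈ Q`. -/
def IsApproxMinOn {E : Type*} [NormedAddCommGroup E] [InnerProductSpace ℝ E]
    (Q : Set E) (Ψ : E → ℝ) (δ : ℝ) (y : E) : Prop :=
  y ∈ Q ∧ ∃ h : E, IsSubgradOn Q Ψ y h ∧ ∀ x ∈ Q, -δ ≤ ⟪h, x - y⟫

/-- per-iteration inequality of the adaptive gradient method with an inexact
`(δ, L, μ, m, V)`-model. -/
-- aux: derivative of t ↦ d (z + t • v) at 0 is ⟪Dd z, v⟫
lemma aux_hasDerivAt {E : Type*} [NormedAddCommGroup E] [InnerProductSpace ℝ E]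
    [CompleteSpace E] (d : E → ℝ) (Dd : E → E) (hd : ∀ x, HasGradientAt d (Dd x) x)
    (z v : E) : HasDerivAt (fun t : ℝ => d (z + t • v)) ⟪Dd z, v⟫ 0 := by
  have hc : HasDerivAt (fun t : ℝ => z + t • v) v 0 := by
    simpa using ((hasDerivAt_id (0:ℝ)).smul_const v).const_add z
  have h1 : HasFDerivAt d (InnerProductSpace.toDual ℝ E (Dd z)) (z + (0:ℝ) • v) := by
    simpa using (hd z).hasFDerivAt
  have h2 := h1.comp_hasDerivAt (0:ℝ) hc
  simp only [zero_smul, add_zero, InnerProductSpace.toDual_apply_apply] at h2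
  exact h2

-- aux: g = h - L • (Dd xp - Dd y) is a subgradient of ψ at xp
lemma aux_subgrad {E : Type*} [NormedAddCommGroup E] [InnerProductSpace ℝ E]
    [CompleteSpace E]
    (Q : Set E) (hQ : Convex ℝ Q)
    (d : E → ℝ) (Dd : E → E) (hd : ∀ x, HasGradientAt d (Dd x) x)
    (ψ : E → ℝ) (hψ : ConvexOn ℝ Q ψ) (L : ℝ) (hL : 0 < L)
    (y : E) (xp : E) (hxpQ : xp ∈ Q) (h : E)
    (hsub : IsSubgradOn Q (fun x => ψ x + L * breg d Dd y x) xp h) :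
    IsSubgradOn Q ψ xp (h - L • (Dd xp - Dd y)) := by
  intro x hx
  set φ : ℝ → ℝ := fun t => d (xp + t • (x - xp)) with hφ
  have hder : HasDerivAt φ ⟪Dd xp, x - xp⟫ 0 := aux_hasDerivAt d Dd hd xp (x - xp)
  have hslope : Filter.Tendsto (slope φ 0) (𝓝[>] (0:ℝ)) (𝓝 ⟪Dd xp, x - xp⟫) :=
    (hasDerivAt_iff_tendsto_slope.mp hder).mono_left
      (nhdsWithin_mono _ (fun t ht => ne_of_gt ht))
  -- key inequality for each t ∈ Ioc 0 1
  have key : ∀ t ∈ Set.Ioc (0:ℝ) 1,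
      ⟪h, x - xp⟫ ≤ ψ x - ψ xp + L * slope φ 0 t - L * ⟪Dd y, x - xp⟫ := by
    intro t ht
    obtain ⟨ht0, ht1⟩ := ht
    set xt : E := xp + t • (x - xp) with hxt
    have hcomb : (1 - t) • xp + t • x = xt := by rw [hxt, smul_sub]; module
    have hxtQ : xt ∈ Q := hcomb ▸ hQ hxpQ hx (by linarith) ht0.le (by ring)
    have hψt : ψ xt ≤ (1 - t) * ψ xp + t * ψ x := by
      have := hψ.2 hxpQ hx (by linarith : (0:ℝ) ≤ 1 - t) ht0.le (by ring)
      have heq : (1 - t) • xp + t • x = xt := by rw [hxt, smul_sub]; module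
      rw [heq] at this
      simpa [smul_eq_mul] using this
    have hs := hsub xt hxtQ
    have hxtsub : xt - xp = t • (x - xp) := by rw [hxt]; abel
    have hinner : ⟪h, xt - xp⟫ = t * ⟪h, x - xp⟫ := by
      rw [hxtsub, real_inner_smul_right]
    have hinner2 : ⟪Dd y, xt - y⟫ = ⟪Dd y, xp - y⟫ + t * ⟪Dd y, x - xp⟫ := by
      have : xt - y = (xp - y) + t • (x - xp) := by rw [hxt]; abel
      rw [this, inner_add_right, real_inner_smul_right]
    have hbreg : breg d Dd y xt = breg d Dd y xp + (φ t - φ 0)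
        - t * ⟪Dd y, x - xp⟫ := by
      simp only [breg, hinner2, hφ, hxt]
      simp
      rw [← hxt, hinner2]
      ring
    have hslope_eq : slope φ 0 t = (φ t - φ 0) / t := by
      simp [slope, sub_zero, inv_mul_eq_div]
    rw [hslope_eq]
    have hst : φ t - φ 0 = t * ((φ t - φ 0) / t) := by
      field_simp
    simp only [hbreg, hinner] at hs
    nlinarith [hs, hψt, hst]
  have hev : ∀ᶠ t in 𝓝[>] (0:ℝ),
      ⟪h, x - xp⟫ ≤ ψ x - ψ xp + L * slope φ 0 t - L * ⟪Dd y, x - xp⟫ := by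
    filter_upwards [Ioc_mem_nhdsGT_of_mem (Set.mem_Ico.mpr ⟨le_refl 0, one_pos⟩)] with t ht
    exact key t ht
  have hlim : Filter.Tendsto (fun t => ψ x - ψ xp + L * slope φ 0 t - L * ⟪Dd y, x - xp⟫)
      (𝓝[>] (0:ℝ)) (𝓝 (ψ x - ψ xp + L * ⟪Dd xp, x - xp⟫ - L * ⟪Dd y, x - xp⟫)) := by
    exact ((hslope.const_mul L).const_add _).sub_const _
  have hfinal : ⟪h, x - xp⟫ ≤ ψ x - ψ xp + L * ⟪Dd xp, x - xp⟫ - L * ⟪Dd y, x - xp⟫ :=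
    ge_of_tendsto hlim hev
  have : ⟪h - L • (Dd xp - Dd y), x - xp⟫
      = ⟪h, x - xp⟫ - L * ⟪Dd xp, x - xp⟫ + L * ⟪Dd y, x - xp⟫ := by
    rw [inner_sub_left, real_inner_smul_left, inner_sub_left]; ring
  rw [this]; linarith

theorem stmt2
    {E : Type*} [NormedAddCommGroup E] [InnerProductSpace ℝ E] [FiniteDimensional ℝ E]
    (Q : Set E) (hQ : Convex ℝ Q)
    (d : E → ℝ) (Dd : E → E)
    (hd_conv : ConvexOn ℝ Set.univ d) (hd_diff : ∀ x, HasGradientAt d (Dd x) x)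
    (f : E → ℝ) (μ m δ δt L : ℝ)
    (hμ : 0 ≤ μ) (hm : 0 ≤ m) (hδ : 0 ≤ δ) (hδt : 0 ≤ δt) (hL : 0 < L)
    (y : E) (hy : y ∈ Q) (c : ℝ)
    (ψ : E → ℝ) (hψ_conv : ConvexOn ℝ Q ψ) (hψ0 : ψ y = 0)
    (hψ_strong : StrongRelConvexOn Q (breg d Dd) m ψ)
    (ha : ∀ x ∈ Q, μ * breg d Dd y x ≤ f x - c - ψ x)
    (xp : E) (hxp : IsApproxMinOn Q (fun x => ψ x + L * breg d Dd y x) δt xp)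
    (hc : ∃ cp : ℝ, f xp ≤ cp + δ ∧ cp ≤ c + ψ xp + L * breg d Dd y xp + δ) :
    ∀ x ∈ Q,
      f xp ≤ f x + (L - μ) * breg d Dd y x - (L + m) * breg d Dd xp x + δt + 2 * δ := by
  obtain ⟨hxpQ, h, hsub, happrox⟩ := hxp
  obtain ⟨cp, hcp1, hcp2⟩ := hc
  intro x hx
  have hg : IsSubgradOn Q ψ xp (h - L • (Dd xp - Dd y)) :=
    aux_subgrad Q hQ d Dd hd_diff ψ hψ_conv L hL y xp hxpQ h hsub
  have hstrong := hψ_strong xp hxpQ _ hg x hx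
  have h3 : breg d Dd y x = breg d Dd y xp + breg d Dd xp x + ⟪Dd xp - Dd y, x - xp⟫ := by
    simp only [breg, inner_sub_left]
    have e1 : ⟪Dd y, x - y⟫ = ⟪Dd y, x - xp⟫ + ⟪Dd y, xp - y⟫ := by
      rw [← inner_add_right]
      congr 1
      abel
    rw [e1]; ring
  have hinner : ⟪h - L • (Dd xp - Dd y), x - xp⟫
      = ⟪h, x - xp⟫ - L * ⟪Dd xp - Dd y, x - xp⟫ := by
    rw [inner_sub_left, real_inner_smul_left]
  have hh := happrox x hx
  have hax := ha x hx
  rw [hinner] at hstrong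
  nlinarith [hstrong, h3, hh, hax, hcp1, hcp2]
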